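/- Let G be a minimum counterexample to the statement 'every odd-hole-free graph H with Δ(H) ≥ 7 satisfies χ(H) ≤ max{Δ(H) − 1, ω(H)}', and let u be a vertex of G with degree Δ(G). Then there is a subset S of N(u) with |S| = Δ(G) − 2 such that S ∪ {u} is a clique of G of size Δ(G) − 1. -/

import Mathlib

/-- `G` has an *odd hole*: an induced cycle of odd length at least 5
(a hole is an induced cycle of length at least 4, so odd holes have length at least 5). -/
def SimpleGraph.HasOddHole {V : Type*} (G : SimpleGraph V) : Prop :=
  ∃ n : ℕ, Odd n ∧ 5 ≤ n ∧ Nonempty (SimpleGraph.cycleGraph n ↪g G)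

open SimpleGraph Finset

set_option linter.unusedSectionVars false
set_option maxHeartbeats 1000000

section Aux

variable {V : Type} [Fintype V] [DecidableEq V]

/-- Extending a partial proper coloring (proper away from `x`) to all of `G`,
given a color `a < k` not used on the neighborhood of `x`. -/
lemma extend_coloring (G : SimpleGraph V) {k : ℕ} {x : V} {c : V → ℕ}
    (hb : ∀ v, c v < k)
    (hp : ∀ ⦃p q : V⦄, G.Adj p q → p ≠ x → q ≠ x → c p ≠ c q)
    {a : ℕ} (ha : a < k) (hfree : ∀ z, G.Adj x z → c z ≠ a) :
    G.Colorable k := by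
  refine ⟨Coloring.mk (fun v => if v = x then (⟨a, ha⟩ : Fin k) else ⟨c v, hb v⟩) ?_⟩
  intro p q hpq hcontra
  have hne : p ≠ q := G.ne_of_adj hpq
  by_cases hpx : p = x <;> by_cases hqx : q = x
  · exact hne (hpx.trans hqx.symm)
  · rw [if_pos hpx, if_neg hqx] at hcontra
    exact hfree q (hpx ▸ hpq) (congrArg Fin.val hcontra).symm
  · rw [if_neg hpx, if_pos hqx] at hcontra
    exact hfree p (hqx ▸ hpq.symm) (congrArg Fin.val hcontra)
  · rw [if_neg hpx, if_neg hqx] at hcontra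
    exact hp hpq hpx hqx (congrArg Fin.val hcontra)

/-- In an uncolorable graph, a partial coloring must use every color on the
neighborhood of the uncolored vertex. -/
lemma all_colors_present (G : SimpleGraph V) [DecidableRel G.Adj] {k : ℕ} {x : V} {c : V → ℕ}
    (hb : ∀ v, c v < k)
    (hp : ∀ ⦃p q : V⦄, G.Adj p q → p ≠ x → q ≠ x → c p ≠ c q)
    (hnc : ¬ G.Colorable k) {a : ℕ} (ha : a < k) :
    ∃ z ∈ G.neighborFinset x, c z = a := by
  by_contra h
  push_neg at h
  exact hnc (extend_coloring G hb hp ha (fun z hz => h z ((G.mem_neighborFinset x z).mpr hz)))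

end Aux

section Induce

variable {V : Type} [Fintype V] [DecidableEq V]

variable (G : SimpleGraph V) [DecidableRel G.Adj] (p : V → Prop) [DecidablePred p]

instance instDecInduce : DecidableRel (G.induce {v | p v}).Adj :=
  fun a b => (inferInstance : Decidable (G.Adj a.val b.val))

lemma induce_not_hasOddHole (h : ¬ G.HasOddHole) : ¬ (G.induce {v | p v}).HasOddHole := by
  rintro ⟨n, h1, h2, ⟨e⟩⟩
  exact h ⟨n, h1, h2, ⟨(SimpleGraph.Embedding.induce {v | p v}).comp e⟩⟩

lemma induce_cliqueNum_le : (G.induce {v | p v}).cliqueNum ≤ G.cliqueNum := by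
  obtain ⟨t, ht⟩ := (G.induce {v | p v}).exists_isNClique_cliqueNum
  have hcl : G.IsClique (t.image Subtype.val : Finset V) := by
    intro x hx y hy hxy
    simp only [coe_image, Set.mem_image, mem_coe] at hx hy
    obtain ⟨x', hx', rfl⟩ := hx
    obtain ⟨y', hy', rfl⟩ := hy
    exact ht.1 hx' hy' (fun h => hxy (congrArg Subtype.val h))
  have hcard : (t.image Subtype.val).card = (G.induce {v | p v}).cliqueNum := by
    rw [Finset.card_image_of_injective t Subtype.val_injective, ht.2]
  calc (G.induce {v | p v}).cliqueNum = (t.image Subtype.val).card := hcard.symm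
    _ ≤ G.cliqueNum := SimpleGraph.IsClique.card_le_cliqueNum (tc := hcl)

lemma induce_degree_le (a : {v // p v}) :
    (G.induce {v | p v}).degree a ≤ G.degree a.val := by
  apply Finset.card_le_card_of_injOn Subtype.val
  · intro z hz
    rw [Finset.mem_coe, SimpleGraph.mem_neighborFinset] at hz
    rw [Finset.mem_coe, SimpleGraph.mem_neighborFinset]
    exact hz
  · exact fun x _ y _ h => Subtype.val_injective h

lemma induce_maxDegree_le : (G.induce {v | p v}).maxDegree ≤ G.maxDegree := by
  apply SimpleGraph.maxDegree_le_of_forall_degree_le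
  intro a
  exact le_trans (induce_degree_le G p a) (G.degree_le_maxDegree a.val)

/-- If all neighbors of `y` satisfy `p`, the degree of `y` in the induced graph is
at least its degree in `G`. -/
lemma le_induce_degree (y : V) (hy : p y) (hnb : ∀ z, G.Adj y z → p z) :
    G.degree y ≤ (G.induce {v | p v}).degree ⟨y, hy⟩ := by
  classical
  apply Finset.card_le_card_of_injOn
    (fun z => if h : p z then (⟨z, h⟩ : {v // p v}) else ⟨y, hy⟩)
  · intro z hz
    rw [Finset.mem_coe, SimpleGraph.mem_neighborFinset] at hz
    beta_reduce
    rw [dif_pos (hnb z hz)]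
    rw [Finset.mem_coe, SimpleGraph.mem_neighborFinset]
    exact hz
  · intro z1 h1 z2 h2 he
    rw [Finset.mem_coe, SimpleGraph.mem_neighborFinset] at h1 h2
    simp only at he
    rw [dif_pos (hnb z1 h1), dif_pos (hnb z2 h2)] at he
    exact congrArg Subtype.val he

lemma induce_card_lt (w : V) : Fintype.card {v // v ≠ w} < Fintype.card V := by
  have h1 : Fintype.card {v // v = w} = 1 := Fintype.card_subtype_eq w
  have h2 : Fintype.card {v // ¬ v = w} = Fintype.card V - Fintype.card {v // v = w} :=
    Fintype.card_subtype_compl _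
  have h3 : 0 < Fintype.card V := Fintype.card_pos_iff.mpr ⟨w⟩
  have : Fintype.card {v // v ≠ w} = Fintype.card {v // ¬ v = w} := rfl
  omega

end Induce

section Merge

variable {V : Type} [Fintype V] [DecidableEq V]

lemma colorable_merge_one (G : SimpleGraph V) {a b : V} (hab : a ≠ b) (hnadj : ¬ G.Adj a b) :
    G.Colorable (Fintype.card V - 1) := by
  have hcard : Fintype.card {v // v ≠ b} = Fintype.card V - 1 := by
    have h1 : Fintype.card {v // v = b} = 1 := Fintype.card_subtype_eq b
    have h2 : Fintype.card {v // ¬ v = b} = Fintype.card V - Fintype.card {v // v = b} :=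
      Fintype.card_subtype_compl _
    have : Fintype.card {v // v ≠ b} = Fintype.card {v // ¬ v = b} := rfl
    omega
  have C : G.Coloring {v // v ≠ b} := by
    refine Coloring.mk (fun v => if h : v = b then ⟨a, hab⟩ else ⟨v, h⟩) ?_
    intro x y hxy hcon
    have hne : x ≠ y := G.ne_of_adj hxy
    by_cases hx : x = b <;> by_cases hy : y = b
    · exact hne (hx.trans hy.symm)
    · rw [dif_pos hx, dif_neg hy] at hcon
      have : a = y := congrArg Subtype.val hcon
      exact hnadj (G.adj_symm (by rwa [hx, ← this] at hxy))
    · rw [dif_neg hx, dif_pos hy] at hcon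
      have : x = a := congrArg Subtype.val hcon
      exact hnadj (by rwa [this, hy] at hxy)
    · rw [dif_neg hx, dif_neg hy] at hcon
      exact hne (congrArg Subtype.val hcon)
  exact hcard ▸ C.colorable

lemma card_ne_ne {b c : V} (hbc : b ≠ c) :
    Fintype.card {v // v ≠ b ∧ v ≠ c} = Fintype.card V - 2 := by
  have he : Fintype.card {v // v ≠ b ∧ v ≠ c} = Fintype.card {v // ¬ (v = b ∨ v = c)} := by
    apply Fintype.card_congr
    apply Equiv.subtypeEquivRight
    intro x
    constructor
    · rintro ⟨h1, h2⟩ (h | h) <;> [exact h1 h; exact h2 h]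
    · intro h; exact ⟨fun hh => h (Or.inl hh), fun hh => h (Or.inr hh)⟩
  have h2 : Fintype.card {v // ¬ (v = b ∨ v = c)} =
      Fintype.card V - Fintype.card {v // v = b ∨ v = c} := Fintype.card_subtype_compl _
  have h3 : Fintype.card {v // v = b ∨ v = c} = 2 := by
    rw [Fintype.card_subtype]
    have : Finset.univ.filter (fun v => v = b ∨ v = c) = ({b, c} : Finset V) := by
      ext z
      simp [Finset.mem_insert, Finset.mem_singleton]
    rw [this, Finset.card_insert_of_notMem (by simpa using hbc), Finset.card_singleton]
  omega

lemma colorable_merge_triangle (G : SimpleGraph V) {a b c : V}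
    (hab : a ≠ b) (hac : a ≠ c) (hbc : b ≠ c)
    (h1 : ¬ G.Adj a b) (h2 : ¬ G.Adj a c) (h3 : ¬ G.Adj b c) :
    G.Colorable (Fintype.card V - 2) := by
  have C : G.Coloring {v // v ≠ b ∧ v ≠ c} := by
    refine Coloring.mk (fun v => if h : v = b ∨ v = c then ⟨a, hab, hac⟩
      else ⟨v, fun hh => h (Or.inl hh), fun hh => h (Or.inr hh)⟩) ?_
    intro x y hxy hcon
    have hne : x ≠ y := G.ne_of_adj hxy
    by_cases hx : x = b ∨ x = c <;> by_cases hy : y = b ∨ y = c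
    · -- x,y ∈ {b,c} distinct → Adj b c
      rcases hx with hx | hx <;> rcases hy with hy | hy
      · exact hne (hx.trans hy.symm)
      · exact h3 (by rwa [hx, hy] at hxy)
      · exact h3 (G.adj_symm (by rwa [hx, hy] at hxy))
      · exact hne (hx.trans hy.symm)
    · rw [dif_pos hx, dif_neg hy] at hcon
      have hya : a = y := congrArg Subtype.val hcon
      rcases hx with hx | hx
      · exact h1 (G.adj_symm (by rwa [hx, ← hya] at hxy))
      · exact h2 (G.adj_symm (by rwa [hx, ← hya] at hxy))
    · rw [dif_neg hx, dif_pos hy] at hcon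
      have hxa : x = a := congrArg Subtype.val hcon
      rcases hy with hy | hy
      · exact h1 (by rwa [hxa, hy] at hxy)
      · exact h2 (by rwa [hxa, hy] at hxy)
    · rw [dif_neg hx, dif_neg hy] at hcon
      exact hne (congrArg Subtype.val hcon)
  exact (card_ne_ne hbc) ▸ C.colorable

lemma colorable_merge_disjoint (G : SimpleGraph V) {a b c d : V}
    (hab : a ≠ b) (hcd : c ≠ d) (hac : a ≠ c) (had : a ≠ d) (hbc : b ≠ c) (hbd : b ≠ d)
    (h1 : ¬ G.Adj a b) (h2 : ¬ G.Adj c d) :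
    G.Colorable (Fintype.card V - 2) := by
  have C : G.Coloring {v // v ≠ b ∧ v ≠ d} := by
    refine Coloring.mk (fun v => if hb : v = b then ⟨a, hab, had⟩
      else if hd : v = d then ⟨c, hbc.symm, hcd⟩ else ⟨v, hb, hd⟩) ?_
    intro x y hxy hcon
    have hne : x ≠ y := G.ne_of_adj hxy
    by_cases hxb : x = b <;> by_cases hyb : y = b
    · exact hne (hxb.trans hyb.symm)
    · rw [dif_pos hxb, dif_neg hyb] at hcon
      by_cases hyd : y = d
      · rw [dif_pos hyd] at hcon
        exact hac (congrArg Subtype.val hcon)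
      · rw [dif_neg hyd] at hcon
        have : a = y := congrArg Subtype.val hcon
        exact h1 (G.adj_symm (by rwa [hxb, ← this] at hxy))
    · rw [dif_neg hxb, dif_pos hyb] at hcon
      by_cases hxd : x = d
      · rw [dif_pos hxd] at hcon
        exact hac (congrArg Subtype.val hcon).symm
      · rw [dif_neg hxd] at hcon
        have : x = a := congrArg Subtype.val hcon
        exact h1 (by rwa [this, hyb] at hxy)
    · rw [dif_neg hxb, dif_neg hyb] at hcon
      by_cases hxd : x = d <;> by_cases hyd : y = d
      · exact hne (hxd.trans hyd.symm)
      · rw [dif_pos hxd, dif_neg hyd] at hcon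
        have : c = y := congrArg Subtype.val hcon
        exact h2 (G.adj_symm (by rwa [hxd, ← this] at hxy))
      · rw [dif_neg hxd, dif_pos hyd] at hcon
        have : x = c := congrArg Subtype.val hcon
        exact h2 (by rwa [this, hyd] at hxy)
      · rw [dif_neg hxd, dif_neg hyd] at hcon
        exact hne (congrArg Subtype.val hcon)
  exact (card_ne_ne hbd) ▸ C.colorable

end Merge

section Dominating

variable {V : Type} [Fintype V] [DecidableEq V]

/-- If `k ≥ |V| - 2`, `G` is not `k`-colorable and `ω(G) ≤ k`, we get a contradiction. -/
lemma dominating_contradiction (G : SimpleGraph V) [DecidableRel G.Adj] {k : ℕ}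
    (hnc : ¬ G.Colorable k) (hk2 : Fintype.card V - 2 ≤ k) (hω : G.cliqueNum ≤ k) : False := by
  have hn : Fintype.card V = Fintype.card V := rfl
  have hkn : k < Fintype.card V := by
    by_contra h
    push_neg at h
    exact hnc ((G.colorable_of_fintype).mono h)
  have huniv : (¬ ∃ x y : V, x ≠ y ∧ ¬ G.Adj x y) → False := by
    intro hE
    push_neg at hE
    have hcl : G.IsClique (Finset.univ : Finset V) := fun x _ y _ hxy => hE x y hxy
    have h2 : (Finset.univ : Finset V).card ≤ G.cliqueNum :=
      SimpleGraph.IsClique.card_le_cliqueNum (tc := hcl)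
    rw [Finset.card_univ] at h2
    omega
  rcases (by omega : k = Fintype.card V - 1 ∨ k = Fintype.card V - 2) with hkeq | hkeq
  · -- k = n - 1 : G must be complete
    have hE : ¬ ∃ x y : V, x ≠ y ∧ ¬ G.Adj x y := by
      rintro ⟨x, y, hxy, hnadj⟩
      exact hnc (hkeq ▸ colorable_merge_one G hxy hnadj)
    exact huniv hE
  · -- k = n - 2
    have htri : ∀ a b c : V, a ≠ b → a ≠ c → b ≠ c →
        ¬ G.Adj a b → ¬ G.Adj a c → ¬ G.Adj b c → False := by
      intro a b c h1 h2 h3 h4 h5 h6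
      exact hnc (hkeq ▸ colorable_merge_triangle G h1 h2 h3 h4 h5 h6)
    have hdis : ∀ a b c d : V, a ≠ b → c ≠ d → a ≠ c → a ≠ d → b ≠ c → b ≠ d →
        ¬ G.Adj a b → ¬ G.Adj c d → False := by
      intro a b c d h1 h2 h3 h4 h5 h6 h7 h8
      exact hnc (hkeq ▸ colorable_merge_disjoint G h1 h2 h3 h4 h5 h6 h7 h8)
    by_cases hE : ∃ x y : V, x ≠ y ∧ ¬ G.Adj x y
    · obtain ⟨x, y, hxy, hnxy⟩ := hE
      by_cases hcenter : ∃ z : V, ∀ s t : V, s ≠ t → ¬ G.Adj s t → (s = z ∨ t = z)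
      · obtain ⟨z, hz⟩ := hcenter
        have hcl : G.IsClique ((Finset.univ : Finset V).erase z) := by
          intro s hs t ht hst
          simp only [Finset.coe_erase, Set.mem_diff, Set.mem_singleton_iff] at hs ht
          by_contra hnadj
          rcases hz s t hst hnadj with h | h
          · exact hs.2 h
          · exact ht.2 h
        have hle : ((Finset.univ : Finset V).erase z).card ≤ G.cliqueNum :=
          SimpleGraph.IsClique.card_le_cliqueNum (tc := hcl)
        rw [Finset.card_erase_of_mem (Finset.mem_univ z), Finset.card_univ] at hle
        have h2card : 1 < Fintype.card V := Fintype.one_lt_card_iff_nontrivial.mpr ⟨⟨x, y, hxy⟩⟩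
        omega
      · push_neg at hcenter
        obtain ⟨p, q, hpq, hnpq, hpx, hqx⟩ := hcenter x
        -- y must be p or q, otherwise two disjoint non-edges
        have hy : y = p ∨ y = q := by
          by_contra h
          push_neg at h
          exact hdis x y p q hxy hpq hpx.symm hqx.symm h.1 h.2 hnxy hnpq
        -- get r with non-edge y–r, r ∉ {x, y}
        obtain ⟨r, hnyr, hrx, hry⟩ : ∃ r : V, ¬ G.Adj y r ∧ r ≠ x ∧ r ≠ y := by
          rcases hy with h | h
          · exact ⟨q, by rwa [← h] at hnpq, hqx, fun hh => hpq (h.symm.trans hh.symm)⟩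
          · refine ⟨p, fun hh => hnpq ?_, hpx, fun hh => hpq (hh.trans h)⟩
            rw [h] at hh
            exact hh.symm
        obtain ⟨s, t, hst, hnst, hsy, hty⟩ := hcenter y
        have hxs : x = s ∨ x = t := by
          by_contra h
          push_neg at h
          exact hdis x y s t hxy hst h.1 h.2 hsy.symm hty.symm hnxy hnst
        have hrs : r = s ∨ r = t := by
          by_contra h
          push_neg at h
          exact hdis y r s t hry.symm hst hsy.symm hty.symm h.1 h.2 hnyr hnst
        have hnxr : ¬ G.Adj x r := by
          rcases hxs with h1 | h1 <;> rcases hrs with h2 | h2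
          · exact absurd (h2.trans h1.symm) hrx
          · rwa [← h1, ← h2] at hnst
          · intro hadj; rw [h1, h2] at hadj; exact hnst hadj.symm
          · exact absurd (h2.trans h1.symm) hrx
        exact htri x y r hxy hrx.symm hry.symm hnxy hnxr hnyr
    · exact huniv hE

end Dominating

section Count

variable {V : Type} [Fintype V] [DecidableEq V]

/-- If all `k` colors occur on `N`, at least `2k - |N|` vertices of `N` have a color
occurring exactly once on `N`. -/
lemma unique_color_count (N : Finset V) (c : V → ℕ) (k : ℕ)
    (hbd : ∀ v ∈ N, c v < k)
    (hall : ∀ a, a < k → ∃ z ∈ N, c z = a) :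
    2 * k ≤ (N.filter (fun v => ∀ z ∈ N, c z = c v → z = v)).card + N.card := by
  classical
  rcases Nat.eq_zero_or_pos k with hk0 | hkpos
  · subst hk0; omega
  obtain ⟨v₀, hv₀, _⟩ := hall 0 hkpos
  have hmem : ∀ v ∈ N, c v ∈ Finset.range k := fun v hv => Finset.mem_range.mpr (hbd v hv)
  have hsum : N.card = ∑ a ∈ Finset.range k, (N.filter (fun v => c v = a)).card :=
    Finset.card_eq_sum_card_fiberwise hmem
  have hpos : ∀ a ∈ Finset.range k, 1 ≤ (N.filter (fun v => c v = a)).card := by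
    intro a ha
    obtain ⟨z, hz, hcz⟩ := hall a (Finset.mem_range.mp ha)
    exact Finset.card_pos.mpr ⟨z, Finset.mem_filter.mpr ⟨hz, hcz⟩⟩
  have hsplit := Finset.card_filter_add_card_filter_not
    (s := Finset.range k) (p := fun a => (N.filter (fun v => c v = a)).card = 1)
  have hs2 := Finset.sum_filter_add_sum_filter_not (Finset.range k)
    (fun a => (N.filter (fun v => c v = a)).card = 1)
    (fun a => (N.filter (fun v => c v = a)).card)
  have h1 : ∑ a ∈ (Finset.range k).filter (fun a => (N.filter (fun v => c v = a)).card = 1),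
      (N.filter (fun v => c v = a)).card
      = ((Finset.range k).filter (fun a => (N.filter (fun v => c v = a)).card = 1)).card := by
    rw [Finset.sum_congr rfl (fun a ha => (Finset.mem_filter.mp ha).2)]
    simp
  have h2 : 2 * ((Finset.range k).filter
        (fun a => ¬ (N.filter (fun v => c v = a)).card = 1)).card ≤
      ∑ a ∈ (Finset.range k).filter (fun a => ¬ (N.filter (fun v => c v = a)).card = 1),
        (N.filter (fun v => c v = a)).card := by
    have := Finset.card_nsmul_le_sum
      ((Finset.range k).filter (fun a => ¬ (N.filter (fun v => c v = a)).card = 1))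
      (fun a => (N.filter (fun v => c v = a)).card) 2 ?_
    · simpa [mul_comm] using this
    · intro a ha
      have ha' := Finset.mem_filter.mp ha
      have := hpos a ha'.1
      show 2 ≤ (N.filter (fun v => c v = a)).card
      omega
  have hUle : ((Finset.range k).filter
        (fun a => (N.filter (fun v => c v = a)).card = 1)).card
      ≤ (N.filter (fun v => ∀ z ∈ N, c z = c v → z = v)).card := by
    apply Finset.card_le_card_of_injOn
      (fun a => if h : 0 < (N.filter (fun v => c v = a)).card
        then (Finset.card_pos.mp h).choose else v₀)
    · intro a ha
      have h1' := (Finset.mem_filter.mp ha).2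
      have hpos' : 0 < (N.filter (fun v => c v = a)).card := by omega
      beta_reduce
      rw [dif_pos hpos']
      have hmemb := (Finset.card_pos.mp hpos').choose_spec
      have hmemb' := Finset.mem_filter.mp hmemb
      refine Finset.mem_filter.mpr ⟨hmemb'.1, ?_⟩
      intro z hz hcz
      have hzf : z ∈ N.filter (fun v => c v = a) :=
        Finset.mem_filter.mpr ⟨hz, by rw [hcz, hmemb'.2]⟩
      exact Finset.card_le_one.mp (le_of_eq h1') z hzf _ hmemb
    · intro a1 ha1 a2 ha2 he
      have h1' := (Finset.mem_filter.mp (Finset.mem_coe.mp ha1)).2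
      have h2' := (Finset.mem_filter.mp (Finset.mem_coe.mp ha2)).2
      have hp1 : 0 < (N.filter (fun v => c v = a1)).card := by omega
      have hp2 : 0 < (N.filter (fun v => c v = a2)).card := by omega
      simp only at he
      rw [dif_pos hp1, dif_pos hp2] at he
      have e1 := (Finset.mem_filter.mp (Finset.card_pos.mp hp1).choose_spec).2
      have e2 := (Finset.mem_filter.mp (Finset.card_pos.mp hp2).choose_spec).2
      rw [← e1, ← e2, he]
  have hIcard : (Finset.range k).card = k := Finset.card_range k
  omega

end Count

section Kempe

variable {V : Type} [Fintype V] [DecidableEq V]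

lemma walk_prefix {G' : SimpleGraph V} {s t : V} (w : G'.Walk s t) :
    ∀ i, i ≤ w.length → ∃ p : G'.Walk s (w.getVert i), p.length ≤ i := by
  intro i
  induction i with
  | zero =>
    intro _
    exact ⟨Walk.nil.copy rfl (w.getVert_zero).symm, by rw [Walk.length_copy]; simp⟩
  | succ i ih =>
    intro hi
    obtain ⟨p, hp⟩ := ih (by omega)
    exact ⟨p.concat (w.adj_getVert_succ (by omega)), by rw [Walk.length_concat]; omega⟩

/-- The Kempe-chain / odd-hole lemma: two neighbors of `x` whose colors each appear
exactly once on the neighborhood of `x` must be adjacent. -/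
lemma kempe_adj (G : SimpleGraph V) [DecidableRel G.Adj]
    (hfree : ¬ G.HasOddHole) {k : ℕ} (hnc : ¬ G.Colorable k)
    (x : V) (c : V → ℕ) (hb : ∀ v, c v < k)
    (hp : ∀ ⦃p q : V⦄, G.Adj p q → p ≠ x → q ≠ x → c p ≠ c q)
    {v₁ v₂ : V} (h1 : G.Adj x v₁) (h2 : G.Adj x v₂) (hc12 : c v₁ ≠ c v₂)
    (hu1 : ∀ z, G.Adj x z → c z = c v₁ → z = v₁)
    (hu2 : ∀ z, G.Adj x z → c z = c v₂ → z = v₂) :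
    G.Adj v₁ v₂ := by
  classical
  by_contra hnadj
  set a := c v₁ with hadef
  set b := c v₂ with hbdef
  have hab : a ≠ b := hc12
  let G' : SimpleGraph V :=
    { Adj := fun p q => G.Adj p q ∧ p ≠ x ∧ q ≠ x ∧
        ((c p = a ∧ c q = b) ∨ (c p = b ∧ c q = a)),
      symm := ⟨by
        rintro p q ⟨hadj, hpx, hqx, hpat⟩
        refine ⟨hadj.symm, hqx, hpx, ?_⟩
        rcases hpat with ⟨hh1, hh2⟩ | ⟨hh1, hh2⟩
        · exact Or.inr ⟨hh2, hh1⟩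
        · exact Or.inl ⟨hh2, hh1⟩⟩,
      loopless := ⟨fun v hv => G.irrefl hv.1⟩ }
  have hG'adj : ∀ ⦃p q : V⦄, G'.Adj p q ↔ (G.Adj p q ∧ p ≠ x ∧ q ≠ x ∧
      ((c p = a ∧ c q = b) ∨ (c p = b ∧ c q = a))) := fun p q => Iff.rfl
  have hv1ne : v₁ ≠ x := (G.ne_of_adj h1).symm
  have hv2ne : v₂ ≠ x := (G.ne_of_adj h2).symm
  by_cases hreach : G'.Reachable v₁ v₂
  · -- reachable : build an odd hole
    obtain ⟨w, hwlen⟩ := hreach.exists_walk_length_eq_dist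
    set L := G'.dist v₁ v₂ with hLdef
    have hv12 : v₁ ≠ v₂ := fun h => hc12 (congrArg c h)
    have hL1 : 0 < L := hreach.pos_dist_of_ne hv12
    have hwr : w.reverse.length = L := by rw [Walk.length_reverse, hwlen]
    have fwd : ∀ i, i ≤ L → ∃ p : G'.Walk v₁ (w.getVert i), p.length ≤ i := by
      intro i hi
      exact walk_prefix w i (by rw [hwlen]; exact hi)
    have bwd : ∀ i, i ≤ L → ∃ p : G'.Walk (w.getVert i) v₂, p.length + i ≤ L := by
      intro i hi
      obtain ⟨p, hp'⟩ := walk_prefix w.reverse (L - i) (by rw [hwr]; omega)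
      have he : w.reverse.getVert (L - i) = w.getVert i := by
        rw [Walk.getVert_reverse]
        congr 1
        rw [hwlen]
        omega
      exact ⟨(p.copy rfl he).reverse, by rw [Walk.length_reverse, Walk.length_copy]; omega⟩
    have hstep : ∀ i, i < L → G'.Adj (w.getVert i) (w.getVert (i + 1)) := by
      intro i hi
      exact w.adj_getVert_succ (by rw [hwlen]; exact hi)
    have hreachg : ∀ i, i ≤ L → G'.Reachable v₁ (w.getVert i) := fun i hi => ⟨(fwd i hi).choose⟩
    have hdist : ∀ i, i ≤ L → G'.dist v₁ (w.getVert i) = i := by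
      intro i hi
      obtain ⟨pf, hpf⟩ := fwd i hi
      obtain ⟨pb, hpb⟩ := bwd i hi
      have hle : G'.dist v₁ (w.getVert i) ≤ i := le_trans (SimpleGraph.dist_le pf) hpf
      obtain ⟨po, hpo⟩ := (hreachg i hi).exists_walk_length_eq_dist
      have h3 := SimpleGraph.dist_le (po.append pb)
      rw [Walk.length_append, hpo] at h3
      rw [← hLdef] at h3
      omega
    have hinj : ∀ i j, i ≤ L → j ≤ L → w.getVert i = w.getVert j → i = j := by
      intro i j hi hj he
      have hdi := hdist i hi
      have hdj := hdist j hj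
      rw [he] at hdi
      omega
    have hnchord : ∀ i j, i + 2 ≤ j → j ≤ L → ¬ G'.Adj (w.getVert i) (w.getVert j) := by
      intro i j hij hj hadj
      obtain ⟨pf, hpf⟩ := fwd i (by omega)
      obtain ⟨pb, hpb⟩ := bwd j hj
      have h3 := SimpleGraph.dist_le ((pf.concat hadj).append pb)
      rw [Walk.length_append, Walk.length_concat] at h3
      rw [← hLdef] at h3
      omega
    have hgetL : w.getVert L = v₂ := by rw [← hwlen]; exact w.getVert_length
    have hne_x : ∀ i, i ≤ L → w.getVert i ≠ x := by
      intro i hi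
      rcases lt_or_eq_of_le hi with hlt | heq
      · exact (hstep i hlt).2.1
      · rw [heq, hgetL]; exact hv2ne
    have hcolg : ∀ i, i ≤ L → c (w.getVert i) = if Even i then a else b := by
      intro i
      induction i with
      | zero =>
        intro _
        rw [w.getVert_zero]
        simp [← hadef]
      | succ i ih =>
        intro hi
        have hilt : i < L := by omega
        have hs := hstep i hilt
        have hihh := ih (by omega)
        rcases hs.2.2.2 with ⟨hpa, hqb⟩ | ⟨hpb, hqa⟩
        · by_cases he : Even i
          · rw [if_pos he] at hihh
            have hno : ¬ Even (i + 1) := by simp [Nat.even_add_one, he]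
            rw [if_neg hno]
            exact hqb
          · rw [if_neg he] at hihh
            exact absurd (hihh.symm.trans hpa) hab.symm
        · by_cases he : Even i
          · rw [if_pos he] at hihh
            exact absurd (hihh.symm.trans hpb) hab
          · rw [if_neg he] at hihh
            have hyes : Even (i + 1) := by simp [Nat.even_add_one, he]
            rw [if_pos hyes]
            exact hqa
    have hLoddO : Odd L := by
      rcases Nat.even_or_odd L with he | ho
      · exfalso
        have hcl := hcolg L le_rfl
        rw [if_pos he, hgetL] at hcl
        exact hab ((hbdef.trans hcl).symm)
      · exact ho
    have hLne1 : L ≠ 1 := by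
      intro he
      have hs := (hstep 0 (by omega)).1
      rw [w.getVert_zero] at hs
      rw [show (0 : ℕ) + 1 = L by omega, hgetL] at hs
      exact hnadj hs
    have hL3 : 3 ≤ L := by
      obtain ⟨m, hm⟩ := hLoddO
      omega
    have hnchordG : ∀ i j, i + 2 ≤ j → j ≤ L → ¬ G.Adj (w.getVert i) (w.getVert j) := by
      intro i j hij hj hadj
      have hdiff := hp hadj (hne_x i (by omega)) (hne_x j hj)
      have hci := hcolg i (by omega)
      have hcj := hcolg j hj
      have hpat : (c (w.getVert i) = a ∧ c (w.getVert j) = b) ∨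
          (c (w.getVert i) = b ∧ c (w.getVert j) = a) := by
        by_cases hei : Even i <;> by_cases hej : Even j
        · rw [if_pos hei] at hci; rw [if_pos hej] at hcj
          exact absurd (hci.trans hcj.symm) hdiff
        · rw [if_pos hei] at hci; rw [if_neg hej] at hcj; exact Or.inl ⟨hci, hcj⟩
        · rw [if_neg hei] at hci; rw [if_pos hej] at hcj; exact Or.inr ⟨hci, hcj⟩
        · rw [if_neg hei] at hci; rw [if_neg hej] at hcj
          exact absurd (hci.trans hcj.symm) hdiff
      exact hnchord i j hij hj ⟨hadj, hne_x i (by omega), hne_x j hj, hpat⟩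
    have hxchord : ∀ i, 0 < i → i < L → ¬ G.Adj x (w.getVert i) := by
      intro i h0 hiL hadj
      have hci := hcolg i (by omega)
      by_cases hei : Even i
      · rw [if_pos hei] at hci
        have hz := hu1 _ hadj (hci.trans hadef)
        have h0' : w.getVert i = w.getVert 0 := by rw [hz, w.getVert_zero]
        have := hinj i 0 (by omega) (by omega) h0'
        omega
      · rw [if_neg hei] at hci
        have hz := hu2 _ hadj (hci.trans hbdef)
        have h0' : w.getVert i = w.getVert L := by rw [hz, hgetL]
        have := hinj i L (by omega) le_rfl h0'
        omega
    -- the cycle x, g 0, g 1, ..., g L is an induced odd cycle of length L + 2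
    set f : Fin (L + 2) → V := fun i => if i.val = 0 then x else w.getVert (i.val - 1) with hf
    have hsub1 : ∀ i j : Fin (L + 2), (i - j = 1) ↔ i.val = (j.val + 1) % (L + 2) := by
      intro i j
      rw [sub_eq_iff_eq_add, Fin.ext_iff, Fin.val_add, Fin.val_one, Nat.add_comm 1 j.val]
    have hmain : ∀ i j : Fin (L + 2), G.Adj (f i) (f j) ↔
        (i.val = (j.val + 1) % (L + 2) ∨ j.val = (i.val + 1) % (L + 2)) := by
      intro i j
      have hiv : i.val < L + 2 := i.isLt
      have hjv : j.val < L + 2 := j.isLt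
      simp only [hf]
      constructor
      · intro hadj
        by_cases hp0 : i.val = 0 <;> by_cases hq0 : j.val = 0
        · rw [if_pos hp0, if_pos hq0] at hadj
          exact absurd hadj (G.irrefl)
        · rw [if_pos hp0, if_neg hq0] at hadj
          have hj1 : j.val - 1 = 0 ∨ j.val - 1 = L := by
            by_contra hcon
            push_neg at hcon
            exact hxchord (j.val - 1) (by omega) (by omega) hadj
          rcases hj1 with h | h
          · right
            rw [Nat.mod_eq_of_lt (by omega)]
            omega
          · left
            have hje : j.val + 1 = L + 2 := by omega
            rw [hje, Nat.mod_self]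
            omega
        · rw [if_neg hp0, if_pos hq0] at hadj
          have hj1 : i.val - 1 = 0 ∨ i.val - 1 = L := by
            by_contra hcon
            push_neg at hcon
            exact hxchord (i.val - 1) (by omega) (by omega) hadj.symm
          rcases hj1 with h | h
          · left
            rw [Nat.mod_eq_of_lt (by omega)]
            omega
          · right
            have hie : i.val + 1 = L + 2 := by omega
            rw [hie, Nat.mod_self]
            omega
        · rw [if_neg hp0, if_neg hq0] at hadj
          have hii : i.val - 1 ≤ L := by omega
          have hjj : j.val - 1 ≤ L := by omega
          have hne' : i.val - 1 ≠ j.val - 1 := by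
            intro hcon
            rw [show i.val - 1 = j.val - 1 from hcon] at hadj
            exact G.irrefl hadj
          have hc1 : ¬ ((i.val - 1) + 2 ≤ j.val - 1) := fun hcon => hnchordG _ _ hcon hjj hadj
          have hc2 : ¬ ((j.val - 1) + 2 ≤ i.val - 1) :=
            fun hcon => hnchordG _ _ hcon hii hadj.symm
          rcases (by omega : j.val = i.val + 1 ∨ i.val = j.val + 1) with h | h
          · right; rw [Nat.mod_eq_of_lt (by omega)]; omega
          · left; rw [Nat.mod_eq_of_lt (by omega)]; omega
      · intro hor
        rcases hor with h | h
        · by_cases hj2 : j.val + 1 < L + 2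
          · rw [Nat.mod_eq_of_lt hj2] at h
            have hip : ¬ i.val = 0 := by omega
            rw [if_neg hip]
            by_cases hq0 : j.val = 0
            · rw [if_pos hq0]
              have hz : i.val - 1 = 0 := by omega
              rw [hz, w.getVert_zero]
              exact h1.symm
            · rw [if_neg hq0]
              have hj1 : j.val - 1 < L := by omega
              have hs := (hstep (j.val - 1) hj1).1
              rw [show j.val - 1 + 1 = i.val - 1 by omega] at hs
              exact hs.symm
          · have hje : j.val + 1 = L + 2 := by omega
            rw [hje, Nat.mod_self] at h
            rw [if_pos h, if_neg (by omega : ¬ j.val = 0),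
              show j.val - 1 = L by omega, hgetL]
            exact h2
        · by_cases hi2 : i.val + 1 < L + 2
          · rw [Nat.mod_eq_of_lt hi2] at h
            have hjp : ¬ j.val = 0 := by omega
            rw [if_neg hjp]
            by_cases hp0 : i.val = 0
            · rw [if_pos hp0]
              have hz : j.val - 1 = 0 := by omega
              rw [hz, w.getVert_zero]
              exact h1
            · rw [if_neg hp0]
              have hi1 : i.val - 1 < L := by omega
              have hs := (hstep (i.val - 1) hi1).1
              rw [show i.val - 1 + 1 = j.val - 1 by omega] at hs
              exact hs
          · have hie : i.val + 1 = L + 2 := by omega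
            rw [hie, Nat.mod_self] at h
            rw [if_pos h, if_neg (by omega : ¬ i.val = 0),
              show i.val - 1 = L by omega, hgetL]
            exact h2.symm
    have hfinj : Function.Injective f := by
      intro i j he
      simp only [hf] at he
      by_cases hp0 : i.val = 0 <;> by_cases hq0 : j.val = 0
      · exact Fin.ext (by omega)
      · rw [if_pos hp0, if_neg hq0] at he
        exact absurd he.symm (hne_x (j.val - 1) (by omega))
      · rw [if_neg hp0, if_pos hq0] at he
        exact absurd he (hne_x (i.val - 1) (by omega))
      · rw [if_neg hp0, if_neg hq0] at he
        have := hinj _ _ (by omega : i.val - 1 ≤ L) (by omega : j.val - 1 ≤ L) he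
        exact Fin.ext (by omega)
    refine hfree ⟨L + 2, ?_, by omega, ⟨⟨⟨f, hfinj⟩, ?_⟩⟩⟩
    · obtain ⟨m, hm⟩ := hLoddO
      exact ⟨m + 1, by omega⟩
    · intro i j
      rw [cycleGraph_adj, hsub1, hsub1]
      exact hmain i j
  · -- not reachable : swap the Kempe chain of v₁ and extend the coloring
    have hcol : ∀ {s t : V}, G'.Walk s t → (c s = a ∨ c s = b) → (c t = a ∨ c t = b) := by
      intro s t w
      induction w with
      | nil => exact id
      | cons h p ih =>
        intro _
        refine ih ?_
        rcases h.2.2.2 with ⟨_, hq⟩ | ⟨_, hq⟩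
        · exact Or.inr hq
        · exact Or.inl hq
    have hcolv : ∀ v, G'.Reachable v₁ v → c v = a ∨ c v = b := by
      intro v hv
      obtain ⟨w⟩ := hv
      exact hcol w (Or.inl rfl)
    set c' : V → ℕ := fun v => if G'.Reachable v₁ v then (if c v = a then b else a) else c v
      with hc'
    have hin : ∀ v, G'.Reachable v₁ v → c v = a → c' v = b := by
      intro v hv hva; simp only [hc', if_pos hv, if_pos hva]
    have hin' : ∀ v, G'.Reachable v₁ v → c v = b → c' v = a := by
      intro v hv hvb
      have : ¬ c v = a := by rw [hvb]; exact hab.symm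
      simp only [hc', if_pos hv, if_neg this]
    have hout : ∀ v, ¬ G'.Reachable v₁ v → c' v = c v := by
      intro v hv; simp only [hc', if_neg hv]
    have hb' : ∀ v, c' v < k := by
      intro v
      by_cases hv : G'.Reachable v₁ v
      · rcases hcolv v hv with h | h
        · rw [hin v hv h]; exact hb v₂
        · rw [hin' v hv h]; exact hb v₁
      · rw [hout v hv]; exact hb v
    have hcross : ∀ ⦃p q : V⦄, G.Adj p q → p ≠ x → q ≠ x → G'.Reachable v₁ p →
        (c q = a ∨ c q = b) → G'.Reachable v₁ q := by
      intro p q hadj hpx hqx hpC hq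
      have hpc := hcolv p hpC
      have hdne := hp hadj hpx hqx
      have hpat : (c p = a ∧ c q = b) ∨ (c p = b ∧ c q = a) := by
        rcases hpc with h | h <;> rcases hq with h' | h'
        · exact absurd (h.trans h'.symm) hdne
        · exact Or.inl ⟨h, h'⟩
        · exact Or.inr ⟨h, h'⟩
        · exact absurd (h.trans h'.symm) hdne
      exact hpC.trans (SimpleGraph.Adj.reachable ⟨hadj, hpx, hqx, hpat⟩)
    have hp' : ∀ ⦃p q : V⦄, G.Adj p q → p ≠ x → q ≠ x → c' p ≠ c' q := by
      intro p q hadj hpx hqx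
      have hdne := hp hadj hpx hqx
      by_cases hpC : G'.Reachable v₁ p <;> by_cases hqC : G'.Reachable v₁ q
      · rcases hcolv p hpC with h | h <;> rcases hcolv q hqC with h' | h'
        · exact absurd (h.trans h'.symm) hdne
        · rw [hin p hpC h, hin' q hqC h']; exact hab.symm
        · rw [hin' p hpC h, hin q hqC h']; exact hab
        · exact absurd (h.trans h'.symm) hdne
      · -- q not in the chain: c q ∉ {a, b}
        have hqnab : ¬ (c q = a ∨ c q = b) := fun hcq => hqC (hcross hadj hpx hqx hpC hcq)
        push_neg at hqnab
        rw [hout q hqC]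
        rcases hcolv p hpC with h | h
        · rw [hin p hpC h]; exact fun hh => hqnab.2 hh.symm
        · rw [hin' p hpC h]; exact fun hh => hqnab.1 hh.symm
      · have hpnab : ¬ (c p = a ∨ c p = b) :=
          fun hcp => hpC (hcross hadj.symm hqx hpx hqC hcp)
        push_neg at hpnab
        rw [hout p hpC]
        rcases hcolv q hqC with h | h
        · rw [hin q hqC h]; exact hpnab.2
        · rw [hin' q hqC h]; exact hpnab.1
      · rw [hout p hpC, hout q hqC]; exact hdne
    have hfree' : ∀ z, G.Adj x z → c' z ≠ a := by
      intro z hz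
      by_cases hzC : G'.Reachable v₁ z
      · rcases hcolv z hzC with h | h
        · rw [hin z hzC h]; exact hab.symm
        · have hz2 : z = v₂ := hu2 z hz h
          rw [hz2] at hzC
          exact absurd hzC hreach
      · rw [hout z hzC]
        intro hza
        have hz1 : z = v₁ := hu1 z hz hza
        rw [hz1] at hzC
        exact hzC (SimpleGraph.Reachable.refl v₁)
    exact hnc (extend_coloring G hb' hp' (hb v₁) hfree')

end Kempe

section Main

/-- In a minimum counterexample `G` to "every odd-hole-free graph `H` with
`Δ(H) ≥ 7` satisfies `χ(H) ≤ max (Δ(H) - 1) (ω(H))`", for any vertex `u` of maximum degree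
there is a set `S ⊆ N(u)` with `|S| = Δ(G) - 2` such that `S ∪ {u}` is a clique of size
`Δ(G) - 1`. -/
theorem statement_7 {V : Type} [Fintype V] [DecidableEq V]
    (G : SimpleGraph V) [DecidableRel G.Adj]
    (hfree : ¬ G.HasOddHole) (hΔ : 7 ≤ G.maxDegree)
    (hcex : (max (G.maxDegree - 1) G.cliqueNum : ℕ) < G.chromaticNumber)
    (hmin : ∀ (W : Type) [Fintype W] (H : SimpleGraph W) [DecidableRel H.Adj],
      Fintype.card W < Fintype.card V → ¬ H.HasOddHole → 7 ≤ H.maxDegree →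
      H.chromaticNumber ≤ (max (H.maxDegree - 1) H.cliqueNum : ℕ))
    (u : V) (hu : G.degree u = G.maxDegree) :
    ∃ S : Finset V, S ⊆ G.neighborFinset u ∧ S.card = G.maxDegree - 2 ∧
      G.IsNClique (G.maxDegree - 1) (insert u S) := by
  classical
  set k := max (G.maxDegree - 1) G.cliqueNum with hkdef
  have hnc : ¬ G.Colorable k := fun h => absurd hcex (not_lt.mpr h.chromaticNumber_le)
  have hk6 : 6 ≤ k := le_trans (by omega : 6 ≤ G.maxDegree - 1) (le_max_left _ _)
  have hkΔ1 : G.maxDegree - 1 ≤ k := le_max_left _ _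
  have hkω : G.cliqueNum ≤ k := le_max_right _ _
  -- given a vertex `w` whose deletion leaves max degree at least 7, obtain a k-coloring
  -- of G - w by minimality
  have hgetcol : ∀ w : V, 7 ≤ (G.induce {v | v ≠ w}).maxDegree →
      ∃ c : V → ℕ, (∀ v, c v < k) ∧
        (∀ ⦃p q : V⦄, G.Adj p q → p ≠ w → q ≠ w → c p ≠ c q) := by
    intro w h7
    have hcard : Fintype.card {v | v ≠ w} < Fintype.card V :=
      Fintype.card_subtype_lt (x := w) (by simp)
    have hchrom := hmin _ (G.induce {v | v ≠ w}) hcard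
      (induce_not_hasOddHole G (fun v => v ≠ w) hfree) h7
    have hbound : max ((G.induce {v | v ≠ w}).maxDegree - 1)
        (G.induce {v | v ≠ w}).cliqueNum ≤ k := by
      have hm := induce_maxDegree_le G (fun v => v ≠ w)
      have hc := induce_cliqueNum_le G (fun v => v ≠ w)
      rw [hkdef]
      exact max_le_max (by omega) hc
    have hcolorable : (G.induce {v | v ≠ w}).Colorable k :=
      (chromaticNumber_le_iff_colorable).mp (hchrom.trans (Nat.cast_le.mpr hbound))
    obtain ⟨c₀⟩ := hcolorable
    set cc : V → ℕ := fun v => if h : v ≠ w then (c₀ ⟨v, h⟩ : Fin k).val else 0 with hcc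
    refine ⟨cc, fun v => ?_, ?_⟩
    · by_cases h : v ≠ w
      · simp only [hcc]; rw [dif_pos h]; exact (c₀ ⟨v, h⟩).isLt
      · simp only [hcc]; rw [dif_neg h]; omega
    · intro p q hadj hpw hqw
      simp only [hcc]
      rw [dif_pos hpw, dif_pos hqw]
      intro hcon
      exact c₀.valid (by exact hadj :
        (G.induce {v | v ≠ w}).Adj ⟨p, hpw⟩ ⟨q, hqw⟩) (Fin.val_injective hcon)
  -- obtain a k-coloring of G - u
  have hgetc : ∃ c : V → ℕ, (∀ v, c v < k) ∧
      (∀ ⦃p q : V⦄, G.Adj p q → p ≠ u → q ≠ u → c p ≠ c q) := by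
    by_cases hI : 7 ≤ (G.induce {v | v ≠ u}).maxDegree
    · exact hgetcol u hI
    · push_neg at hI
      -- every vertex not adjacent (and unequal) to u has G-degree at most 6
      have hdeg6 : ∀ w : V, w ≠ u → ¬ G.Adj u w → G.degree w ≤ 6 := by
        intro w hwu hnadj
        have hnb : ∀ z, G.Adj w z → z ≠ u := by
          intro z hz hzu
          exact hnadj (hzu ▸ hz).symm
        have hle : G.degree w ≤ (G.induce {v | v ≠ u}).degree ⟨w, hwu⟩ :=
          le_induce_degree G (fun v => v ≠ u) w hwu hnb
        have hmd := (G.induce {v | v ≠ u}).degree_le_maxDegree ⟨w, hwu⟩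
        omega
      by_cases hw : ∃ w : V, w ≠ u ∧ ¬ G.Adj u w
      · obtain ⟨w, hwu, hwnadj⟩ := hw
        -- deleting w keeps u at degree ≥ 7
        have h7w : 7 ≤ (G.induce {v | v ≠ w}).maxDegree := by
          have hnb : ∀ z, G.Adj u z → z ≠ w := by
            intro z hz hzw
            exact hwnadj (hzw ▸ hz)
          have hle : G.degree u ≤ (G.induce {v | v ≠ w}).degree ⟨u, hwu.symm⟩ :=
            le_induce_degree G (fun v => v ≠ w) u hwu.symm hnb
          have hmd := (G.induce {v | v ≠ w}).degree_le_maxDegree ⟨u, hwu.symm⟩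
          omega
        obtain ⟨c₁, hc₁b, hc₁p⟩ := hgetcol w h7w
        by_cases hmiss : ∃ a, a < k ∧ ∀ z ∈ G.neighborFinset w, c₁ z ≠ a
        · -- some color is unused on N(w): recolor w with it, uncoloring u
          obtain ⟨a₀, ha₀, hmiss'⟩ := hmiss
          set cc : V → ℕ := fun v => if v = w then a₀ else c₁ v with hccd
          refine ⟨cc, fun v => ?_, ?_⟩
          · by_cases h : v = w
            · simp only [hccd]; rw [if_pos h]; exact ha₀
            · simp only [hccd]; rw [if_neg h]; exact hc₁b v
          · intro p q hadj hpu hqu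
            simp only [hccd]
            by_cases hpw : p = w <;> by_cases hqw : q = w
            · exact absurd (hpw.trans hqw.symm) (G.ne_of_adj hadj)
            · rw [if_pos hpw, if_neg hqw]
              intro hcon
              have hqN : q ∈ G.neighborFinset w :=
                (G.mem_neighborFinset w q).mpr (hpw ▸ hadj)
              exact hmiss' q hqN hcon.symm
            · rw [if_neg hpw, if_pos hqw]
              intro hcon
              have hpN : p ∈ G.neighborFinset w :=
                (G.mem_neighborFinset w p).mpr (hqw ▸ hadj).symm
              exact hmiss' p hpN hcon
            · rw [if_neg hpw, if_neg hqw]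
              exact hc₁p hadj hpw hqw
        · -- all k colors appear on N(w): N(w) ∪ {w} is a (k+1)-clique, contradiction
          exfalso
          push_neg at hmiss
          have hall' : ∀ a, a < k → ∃ z ∈ G.neighborFinset w, c₁ z = a := hmiss
          have hdw : G.degree w ≤ 6 := hdeg6 w hwu hwnadj
          have himg : Finset.range k ⊆ (G.neighborFinset w).image c₁ := by
            intro a ha
            obtain ⟨z, hz, hcz⟩ := hall' a (Finset.mem_range.mp ha)
            exact Finset.mem_image.mpr ⟨z, hz, hcz⟩
          have hk_le : k ≤ G.degree w := by
            calc k = (Finset.range k).card := (Finset.card_range k).symm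
              _ ≤ ((G.neighborFinset w).image c₁).card := Finset.card_le_card himg
              _ ≤ (G.neighborFinset w).card := Finset.card_image_le
              _ = G.degree w := G.card_neighborFinset_eq_degree w
          have hinjOn : Set.InjOn c₁ (G.neighborFinset w) := by
            apply Finset.injOn_of_card_image_eq
            have h1 : ((G.neighborFinset w).image c₁).card ≤ (G.neighborFinset w).card :=
              Finset.card_image_le
            have h2 : k ≤ ((G.neighborFinset w).image c₁).card :=
              (Finset.card_range k) ▸ Finset.card_le_card himg
            have h3 : (G.neighborFinset w).card = G.degree w := G.card_neighborFinset_eq_degree w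
            omega
          have hclq : G.IsClique (insert w (G.neighborFinset w) : Finset V) := by
            intro s hs t ht hst
            simp only [Finset.coe_insert, Set.mem_insert_iff, Finset.mem_coe,
              mem_neighborFinset] at hs ht
            rcases hs with hs | hs <;> rcases ht with ht | ht
            · exact absurd (hs.trans ht.symm) hst
            · exact hs ▸ ht
            · exact (ht ▸ hs).symm
            · refine kempe_adj G hfree hnc w c₁ hc₁b hc₁p hs ht ?_ ?_ ?_
              · intro hcon
                exact hst (hinjOn ((G.mem_neighborFinset w s).mpr hs)
                  ((G.mem_neighborFinset w t).mpr ht) hcon)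
              · intro z hz hcz
                exact hinjOn ((G.mem_neighborFinset w z).mpr hz)
                  ((G.mem_neighborFinset w s).mpr hs) hcz
              · intro z hz hcz
                exact hinjOn ((G.mem_neighborFinset w z).mpr hz)
                  ((G.mem_neighborFinset w t).mpr ht) hcz
          have hcard7 : (insert w (G.neighborFinset w)).card = G.degree w + 1 := by
            rw [Finset.card_insert_of_notMem (G.notMem_neighborFinset_self w),
              G.card_neighborFinset_eq_degree w]
          have hle := SimpleGraph.IsClique.card_le_cliqueNum (tc := hclq)
          rw [hcard7] at hle
          omega
      · push_neg at hw
        -- u is dominating; contradiction via the complement-star argument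
        exfalso
        have hNu : G.neighborFinset u = Finset.univ.erase u := by
          ext z
          simp only [mem_neighborFinset, Finset.mem_erase, Finset.mem_univ, and_true]
          constructor
          · intro h; exact (G.ne_of_adj h).symm
          · intro h; exact hw z h
        have hdegu : G.degree u = Fintype.card V - 1 := by
          rw [← card_neighborFinset_eq_degree, hNu,
            Finset.card_erase_of_mem (Finset.mem_univ u), Finset.card_univ]
        have hk2 : Fintype.card V - 2 ≤ k := by omega
        exact dominating_contradiction G hnc hk2 hkω
  obtain ⟨c, hb, hp⟩ := hgetc
  have hall : ∀ a, a < k → ∃ z ∈ G.neighborFinset u, c z = a :=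
    fun a ha => all_colors_present G hb hp hnc ha
  have hdegN : (G.neighborFinset u).card = G.maxDegree := by
    rw [G.card_neighborFinset_eq_degree u, hu]
  have hcount := unique_color_count (G.neighborFinset u) c k (fun v _ => hb v) hall
  have hkΔ : k ≤ G.maxDegree := by
    have himg : Finset.range k ⊆ (G.neighborFinset u).image c := by
      intro a ha
      obtain ⟨z, hz, hcz⟩ := hall a (Finset.mem_range.mp ha)
      exact Finset.mem_image.mpr ⟨z, hz, hcz⟩
    calc k = (Finset.range k).card := (Finset.card_range k).symm
      _ ≤ ((G.neighborFinset u).image c).card := Finset.card_le_card himg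
      _ ≤ (G.neighborFinset u).card := Finset.card_image_le
      _ = G.maxDegree := hdegN
  set U := (G.neighborFinset u).filter (fun v => ∀ z ∈ G.neighborFinset u, c z = c v → z = v)
    with hUdef
  have hUcard : G.maxDegree - 2 ≤ U.card := by omega
  obtain ⟨S, hSU, hScard⟩ := Finset.exists_subset_card_eq hUcard
  have hSN : S ⊆ G.neighborFinset u := hSU.trans (Finset.filter_subset _ _)
  have hUadj : ∀ s ∈ U, ∀ t ∈ U, s ≠ t → G.Adj s t := by
    intro s hs t ht hst
    have hs' := Finset.mem_filter.mp hs
    have ht' := Finset.mem_filter.mp ht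
    refine kempe_adj G hfree hnc u c hb hp ((G.mem_neighborFinset u s).mp hs'.1)
      ((G.mem_neighborFinset u t).mp ht'.1) ?_ ?_ ?_
    · intro hcon
      exact hst (ht'.2 s hs'.1 hcon)
    · intro z hz hcz
      exact hs'.2 z ((G.mem_neighborFinset u z).mpr hz) hcz
    · intro z hz hcz
      exact ht'.2 z ((G.mem_neighborFinset u z).mpr hz) hcz
  have hunotS : u ∉ S := fun h => G.notMem_neighborFinset_self u (hSN h)
  refine ⟨S, hSN, hScard, ?_, ?_⟩
  · intro s hs t ht hst
    simp only [Finset.coe_insert, Set.mem_insert_iff, Finset.mem_coe] at hs ht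
    rcases hs with hs | hs <;> rcases ht with ht | ht
    · exact absurd (hs.trans ht.symm) hst
    · rw [hs]; exact (G.mem_neighborFinset u t).mp (hSN ht)
    · rw [ht]; exact ((G.mem_neighborFinset u s).mp (hSN hs)).symm
    · exact hUadj s (hSU hs) t (hSU ht) hst
  · rw [Finset.card_insert_of_notMem hunotS, hScard]
    omega

end Main
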